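/- For all natural numbers s, t with 1 ≤ t ≤ s, in ℤ[x,x⁻¹][[q]] one has (1 − q)(1 − qx)(1 − qx⁻¹) · ∑_{ℓ=0}^{t−1} ∑_{n=0}^{t−1−ℓ} ∑_{σ=ℓ}^{∞} ∑_{k=0}^{σ} q^{σ+2n} χ_{s+k−ℓ}(x) = ∑_{τ=1}^{t} q^{t−τ} (χ_s(x) − q^τ χ_{s−τ}(x)). (Character form of the branching rule: the so(2,4) rectangular partially massless module D(s+2−t;(s,s)) of spin s and depth t restricts to the direct sum ⊕_{τ=1}^{t} D(s+2−τ;(s)) of so(2,3) partially massless spin-s modules of depths τ = 1,…,t.) -/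

import Mathlib

/-- The so(3) character `χ_n(x) = ∑_{k=0}^n x^{n-2k}` in ℤ[x,x⁻¹]. -/
noncomputable def chi (n : ℕ) : LaurentPolynomial ℤ :=
  ∑ k ∈ Finset.range (n + 1), LaurentPolynomial.T ((n : ℤ) - 2 * k)

open Finset LaurentPolynomial PowerSeries

lemma chi_zero : chi 0 = 1 := by simp [chi]

lemma chi_one : chi 1 = T 1 + T (-1) := by
  simp [chi, Finset.sum_range_succ]

lemma T_mul_T (a b : ℤ) : (T a : LaurentPolynomial ℤ) * T b = T (a + b) := (T_add a b).symm

lemma chi_rec (n : ℕ) : chi 1 * chi (n + 1) = chi (n + 2) + chi n := by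
  rw [chi_one]
  unfold chi
  rw [Finset.mul_sum]
  have hterm : ∀ k : ℕ, (T 1 + T (-1)) * (T ((((n:ℕ)+1:ℕ):ℤ) - 2*(k:ℤ)) : LaurentPolynomial ℤ)
      = T ((((n:ℕ)+2:ℕ):ℤ) - 2*k) + T ((n:ℤ) - 2*k) := by
    intro k
    rw [add_mul, T_mul_T, T_mul_T]
    push_cast
    ring_nf
  rw [Finset.sum_congr rfl (fun k _ => hterm k), Finset.sum_add_distrib]
  rw [Finset.sum_range_succ (fun k => (T ((((n:ℕ)+2:ℕ):ℤ) - 2*(k:ℤ)) : LaurentPolynomial ℤ)) (n+2)]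
  rw [Finset.sum_range_succ (fun k => (T (((n:ℕ):ℤ) - 2*(k:ℤ)) : LaurentPolynomial ℤ)) (n+1)]
  have h1 : ((((n:ℕ)+2:ℕ):ℤ) - 2*((n+2:ℕ):ℤ)) = ((n:ℕ):ℤ) - 2*((n+1:ℕ):ℤ) := by push_cast; ring
  rw [h1]
  abel

/-- `Qs s t = ∑_{τ=1}^{t} chi (s - τ)`. -/
noncomputable def Qs (s t : ℕ) : LaurentPolynomial ℤ :=
  ∑ r ∈ Finset.range t, chi (s - 1 - r)

lemma Qs_zero (s : ℕ) : Qs s 0 = 0 := by simp [Qs]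

lemma Qs_one (s : ℕ) : Qs s 1 = chi (s - 1) := by simp [Qs]

lemma Qs_rec (s t : ℕ) (h1 : 1 ≤ t) (h2 : t + 1 ≤ s) :
    chi 1 * Qs s t = chi s + Qs s (t - 1) + (Qs s (t + 1) - chi (s - 1)) := by
  unfold Qs
  rw [Finset.mul_sum]
  have hterm : ∀ r ∈ Finset.range t, chi 1 * chi (s - 1 - r) = chi (s - r) + chi (s - 2 - r) := by
    intro r hr
    rw [Finset.mem_range] at hr
    have e1 : s - 1 - r = (s - 2 - r) + 1 := by omega
    have e2 : s - r = (s - 2 - r) + 2 := by omega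
    rw [e1, e2, chi_rec]
  rw [Finset.sum_congr rfl hterm, Finset.sum_add_distrib]
  have hA : ∑ r ∈ Finset.range t, chi (s - r) = chi s + ∑ r ∈ Finset.range (t-1), chi (s - 1 - r) := by
    obtain ⟨t', rfl⟩ : ∃ t', t = t' + 1 := ⟨t - 1, by omega⟩
    rw [Finset.sum_range_succ' (fun r => chi (s - r)) t']
    simp only [Nat.sub_zero, Nat.add_sub_cancel]
    rw [add_comm]
    congr 1
    exact Finset.sum_congr rfl fun r _ => by congr 1; omega
  have hB : ∑ r ∈ Finset.range (t+1), chi (s - 1 - r)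
      = (∑ r ∈ Finset.range t, chi (s - 2 - r)) + chi (s - 1) := by
    rw [Finset.sum_range_succ' (fun r => chi (s - 1 - r)) t]
    simp only [Nat.sub_zero]
    congr 1
    exact Finset.sum_congr rfl fun r _ => by congr 1; omega
  rw [hA, hB]
  abel

section

local notation "R" => LaurentPolynomial ℤ

/-- `Dq = 1 - χ₁ q + q²`, the "so(3) denominator" `(1-qx)(1-qx⁻¹)`. -/
noncomputable def Dq : PowerSeries R := 1 - PowerSeries.C (chi 1) * PowerSeries.X + PowerSeries.X ^ 2

/-- `Eq s ℓ`: closed form of the full denominator times one `ℓ`-block. -/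
noncomputable def Eq' (s ℓ : ℕ) : PowerSeries R :=
  PowerSeries.C (chi s) - PowerSeries.C (chi (s - 1)) * PowerSeries.X + Dq * PowerSeries.C (Qs s ℓ)

lemma factor_eq :
    (1 - PowerSeries.C (T 1) * PowerSeries.X) * (1 - PowerSeries.C (T (-1)) * PowerSeries.X) = Dq := by
  have h1 : (T 1 : R) * T (-1) = 1 := by rw [T_mul_T]; norm_num
  unfold Dq
  rw [chi_one, map_add]
  have : (PowerSeries.C (T 1 : R) * PowerSeries.X) * (PowerSeries.C (T (-1)) * PowerSeries.X)
      = PowerSeries.X ^ 2 := by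
    rw [mul_mul_mul_comm, ← map_mul, h1, map_one, one_mul, sq]
  linear_combination this

lemma coeff_Dq_mul (φ : PowerSeries R) (m : ℕ) :
    (PowerSeries.coeff m) (Dq * φ) =
      (PowerSeries.coeff m) φ - chi 1 * (if m = 0 then 0 else (PowerSeries.coeff (m-1)) φ)
      + (if 2 ≤ m then (PowerSeries.coeff (m-2)) φ else 0) := by
  have : Dq * φ = φ - PowerSeries.C (chi 1) * (PowerSeries.X * φ) + PowerSeries.X ^ 2 * φ := by
    unfold Dq; ring
  rw [this, map_add, map_sub, coeff_C_mul, coeff_X_pow_mul']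
  congr 2
  · cases m with
    | zero => simp
    | succ k => simp [coeff_succ_X_mul]

lemma geom (a : ℕ) :
    Dq * PowerSeries.mk (fun σ => chi (a + 1 + σ)) =
      PowerSeries.C (chi (a + 1)) - PowerSeries.C (chi a) * PowerSeries.X := by
  ext m : 1
  rw [coeff_Dq_mul, map_sub, PowerSeries.coeff_C, coeff_C_mul, PowerSeries.coeff_X]
  simp only [coeff_mk]
  match m with
  | 0 => simp
  | 1 =>
    have := chi_rec a
    simp only [show ¬(1=0) by omega, if_false, show ¬(2≤1) by omega, if_false, if_true]
    have e : a + 1 + 0 = a + 1 := by omega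
    rw [e]
    linear_combination -this
  | (k+2) =>
    have := chi_rec (a + k + 1)
    simp only [show ¬(k+2=0) by omega, if_false, show (2≤k+2) by omega, if_true,
      show ¬(k+2=1) by omega, if_false]
    have e1 : a + 1 + (k + 2) = a + k + 1 + 2 := by omega
    have e2 : a + 1 + (k + 2 - 1) = a + k + 1 + 1 := by omega
    have e3 : a + 1 + (k + 2 - 2) = a + k + 1 := by omega
    rw [e1, e2, e3]
    linear_combination -this

lemma Qs_reflect (s ℓ : ℕ) (hl : ℓ ≤ s) :
    Qs s ℓ = ∑ k ∈ Finset.range ℓ, chi (s + k - ℓ) := by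
  unfold Qs
  rw [← Finset.sum_range_reflect (fun k => chi (s + k - ℓ)) ℓ]
  exact Finset.sum_congr rfl fun j hj => by
    rw [Finset.mem_range] at hj; congr 1; omega

lemma stepC (s ℓ : ℕ) (hl : ℓ ≤ s) :
    (1 - PowerSeries.X) * PowerSeries.mk (fun σ => ∑ k ∈ Finset.range (σ + ℓ + 1), chi (s + k - ℓ))
      = PowerSeries.mk (fun σ => chi (s + σ)) + PowerSeries.C (Qs s ℓ) := by
  ext m : 1
  rw [sub_mul, one_mul, map_sub, map_add, PowerSeries.coeff_C, coeff_mk, coeff_mk]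
  match m with
  | 0 =>
    rw [PowerSeries.coeff_zero_X_mul]
    simp only [if_true, sub_zero, zero_add]
    rw [Finset.sum_range_succ, Qs_reflect s ℓ hl]
    rw [show s + ℓ - ℓ = s + 0 by omega]
    ring
  | (σ+1) =>
    rw [PowerSeries.coeff_succ_X_mul, coeff_mk]
    simp only [show ¬(σ+1=0) by omega, if_false, add_zero]
    rw [show σ + 1 + ℓ + 1 = (σ + ℓ + 1) + 1 by omega, Finset.sum_range_succ]
    rw [show s + (σ + ℓ + 1) - ℓ = s + (σ + 1) by omega]
    ring

lemma star (s t : ℕ) (h : t + 1 ≤ s) :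
    ∑ ℓ ∈ Finset.range (t + 1), PowerSeries.X ^ (t - ℓ) * Eq' s ℓ
      = PowerSeries.C (chi s) + PowerSeries.C (Qs s t)
        - PowerSeries.X * PowerSeries.C (Qs s (t + 1)) := by
  induction t with
  | zero =>
    rw [Finset.sum_range_one]
    simp only [Nat.sub_zero, pow_zero, one_mul, Eq', Qs_zero, Qs_one, map_zero, mul_zero, add_zero]
    rw [Qs_one]
    ring
  | succ t ih =>
    have ih' := ih (by omega)
    rw [Finset.sum_range_succ]
    have hpeel : ∀ ℓ ∈ Finset.range (t + 1),
        PowerSeries.X ^ (t + 1 - ℓ) * Eq' s ℓ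
          = PowerSeries.X * (PowerSeries.X ^ (t - ℓ) * Eq' s ℓ) := by
      intro ℓ hℓ
      rw [Finset.mem_range] at hℓ
      rw [← mul_assoc, ← pow_succ', show t - ℓ + 1 = t + 1 - ℓ by omega]
    rw [Finset.sum_congr rfl hpeel, ← Finset.mul_sum, ih']
    have hQ : PowerSeries.C (chi 1) * PowerSeries.C (Qs s (t+1))
        = PowerSeries.C (chi s) + PowerSeries.C (Qs s t)
          + (PowerSeries.C (Qs s (t+2)) - PowerSeries.C (chi (s-1))) := by
      rw [← map_mul, Qs_rec s (t+1) (by omega) (by omega)]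
      simp only [map_add, map_sub, Nat.add_sub_cancel]
    rw [Nat.sub_self]
    simp only [pow_zero, one_mul, Eq', Dq]
    linear_combination -(PowerSeries.X : PowerSeries R) * hQ

lemma main_id (s t : ℕ) (h1 : 1 ≤ t) (h2 : t ≤ s) :
    ∑ ℓ ∈ Finset.range t, ∑ n ∈ Finset.range (t - ℓ), PowerSeries.X ^ (2*n + ℓ) * Eq' s ℓ
      = (∑ m ∈ Finset.range t, PowerSeries.X ^ m) * PowerSeries.C (chi s)
        - PowerSeries.X ^ t * PowerSeries.C (Qs s t) := by
  induction t with
  | zero => omega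
  | succ t ih =>
    rcases Nat.eq_zero_or_pos t with rfl | ht
    · rw [Finset.sum_range_one, Nat.sub_zero, Finset.sum_range_one, Finset.sum_range_one]
      simp only [mul_zero, zero_add, pow_zero, one_mul, pow_one, Eq', Qs_zero, Qs_one,
        map_zero, mul_zero, add_zero]
      ring
    · have ih' := ih ht (by omega)
      have hsplit : ∀ ℓ ∈ Finset.range (t + 1),
          (∑ n ∈ Finset.range (t + 1 - ℓ), PowerSeries.X ^ (2*n + ℓ) * Eq' s ℓ)
            = (∑ n ∈ Finset.range (t - ℓ), PowerSeries.X ^ (2*n + ℓ) * Eq' s ℓ)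
              + PowerSeries.X ^ t * (PowerSeries.X ^ (t - ℓ) * Eq' s ℓ) := by
        intro ℓ hℓ
        rw [Finset.mem_range] at hℓ
        rw [show t + 1 - ℓ = (t - ℓ) + 1 by omega, Finset.sum_range_succ]
        congr 1
        rw [← mul_assoc, ← pow_add]
        congr 2
        omega
      rw [Finset.sum_congr rfl hsplit, Finset.sum_add_distrib, ← Finset.mul_sum,
        star s t (by omega), Finset.sum_range_succ _ t]
      rw [show t - t = 0 from by omega]
      simp only [Finset.range_zero, Finset.sum_empty, add_zero]
      rw [ih', Finset.sum_range_succ _ t]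
      rw [pow_succ]
      ring

lemma full_mul_W (s ℓ : ℕ) (hs : 1 ≤ s) (hl : ℓ ≤ s) :
    ((1 - PowerSeries.X) * Dq) *
        PowerSeries.mk (fun σ => ∑ k ∈ Finset.range (σ + ℓ + 1), chi (s + k - ℓ))
      = Eq' s ℓ := by
  rw [mul_comm (1 - PowerSeries.X) Dq, mul_assoc, stepC s ℓ hl, mul_add]
  have : PowerSeries.mk (fun σ => chi (s + σ)) = PowerSeries.mk (fun σ => chi (s - 1 + 1 + σ)) := by
    ext σ : 1
    rw [coeff_mk, coeff_mk]
    congr 1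
    omega
  rw [this, geom (s - 1), show s - 1 + 1 = s by omega]
  rfl

end

/-- Branching of the so(2,4) rectangular partially massless module `D(s+2-t;(s,s))`
onto so(2,3), in character form:
`(1-q)(1-qx)(1-qx⁻¹) · ∑_{ℓ=0}^{t-1} ∑_{n=0}^{t-1-ℓ} ∑_{σ≥ℓ} ∑_{k=0}^{σ} q^{σ+2n} χ_{s+k-ℓ}(x)
  = ∑_{τ=1}^{t} q^{t-τ} (χ_s(x) - q^τ χ_{s-τ}(x))`.
On the left, the coefficient of `q^m` collects the terms with `σ = m - 2n ≥ ℓ`. -/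
theorem rectangular_PM_branching (s t : ℕ) (ht : 1 ≤ t) (hts : t ≤ s) :
    (1 - PowerSeries.X) *
      (1 - PowerSeries.C (R := LaurentPolynomial ℤ) (LaurentPolynomial.T 1) * PowerSeries.X) *
      (1 - PowerSeries.C (R := LaurentPolynomial ℤ) (LaurentPolynomial.T (-1)) * PowerSeries.X) *
      PowerSeries.mk (fun m =>
        ∑ ℓ ∈ Finset.range t, ∑ n ∈ Finset.range (t - ℓ),
          if 2 * n + ℓ ≤ m then
            ∑ k ∈ Finset.range ((m - 2 * n) + 1), chi (s + k - ℓ)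
          else 0) =
    ∑ τ ∈ Finset.Icc 1 t,
      PowerSeries.X ^ (t - τ) *
        (PowerSeries.C (R := LaurentPolynomial ℤ) (chi s) -
          PowerSeries.C (R := LaurentPolynomial ℤ) (chi (s - τ)) * PowerSeries.X ^ τ) := by
  have hs : 1 ≤ s := le_trans ht hts
  -- Step 1: decompose the `mk` into blocks
  have hM : PowerSeries.mk (fun m =>
        ∑ ℓ ∈ Finset.range t, ∑ n ∈ Finset.range (t - ℓ),
          if 2 * n + ℓ ≤ m then
            ∑ k ∈ Finset.range ((m - 2 * n) + 1), chi (s + k - ℓ)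
          else 0)
      = ∑ ℓ ∈ Finset.range t, ∑ n ∈ Finset.range (t - ℓ),
          PowerSeries.X ^ (2*n + ℓ) *
            PowerSeries.mk (fun σ => ∑ k ∈ Finset.range (σ + ℓ + 1), chi (s + k - ℓ)) := by
    ext m : 1
    rw [coeff_mk, map_sum]
    refine Finset.sum_congr rfl fun ℓ hℓ => ?_
    rw [map_sum]
    refine Finset.sum_congr rfl fun n hn => ?_
    rw [coeff_X_pow_mul', coeff_mk]
    split_ifs with h
    · congr 1
      congr 1
      omega
    · rfl
  -- Step 2: rewrite the prefactor
  rw [mul_assoc (1 - PowerSeries.X), factor_eq, hM, Finset.mul_sum]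
  have h2 : ∀ ℓ ∈ Finset.range t,
      (1 - PowerSeries.X) * Dq *
        (∑ n ∈ Finset.range (t - ℓ), PowerSeries.X ^ (2*n + ℓ) *
          PowerSeries.mk (fun σ => ∑ k ∈ Finset.range (σ + ℓ + 1), chi (s + k - ℓ)))
      = ∑ n ∈ Finset.range (t - ℓ), PowerSeries.X ^ (2*n + ℓ) * Eq' s ℓ := by
    intro ℓ hℓ
    rw [Finset.mem_range] at hℓ
    rw [Finset.mul_sum]
    refine Finset.sum_congr rfl fun n _ => ?_
    rw [mul_left_comm, full_mul_W s ℓ hs (by omega)]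
  rw [Finset.sum_congr rfl h2, main_id s t ht hts]
  -- Step 3: rewrite the RHS
  have hIcc : Finset.Icc 1 t = Finset.Ico 1 (t+1) := by rw [Finset.Ico_add_one_right_eq_Icc]
  rw [hIcc, Finset.sum_Ico_eq_sum_range]
  simp only [Nat.add_sub_cancel]
  have h3 : ∀ i ∈ Finset.range t,
      PowerSeries.X ^ (t - (1 + i)) *
        (PowerSeries.C (R := LaurentPolynomial ℤ) (chi s) -
          PowerSeries.C (R := LaurentPolynomial ℤ) (chi (s - (1 + i))) * PowerSeries.X ^ (1 + i))
      = PowerSeries.X ^ (t - 1 - i) * PowerSeries.C (R := LaurentPolynomial ℤ) (chi s)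
        - PowerSeries.X ^ t * PowerSeries.C (R := LaurentPolynomial ℤ) (chi (s - 1 - i)) := by
    intro i hi
    rw [Finset.mem_range] at hi
    rw [mul_sub, show t - (1+i) = t - 1 - i by omega]
    congr 1
    rw [show s - (1+i) = s - 1 - i by omega, mul_comm (PowerSeries.C _), ← mul_assoc, ← pow_add,
      show t - 1 - i + (1 + i) = t by omega]
  rw [Finset.sum_congr rfl h3, Finset.sum_sub_distrib,
    Finset.sum_range_reflect
      (fun m => PowerSeries.X ^ m * PowerSeries.C (R := LaurentPolynomial ℤ) (chi s)) t,
    ← Finset.mul_sum, ← map_sum, Finset.sum_mul]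
  rfl
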